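/- Let n ≥ 4 and let W ⊆ V(H_n) be a set satisfying: (a) W contains at most one vertex from each column C_i; (b) if n is odd, W does not contain n−1 or more vertices of any single row (up to the row symmetry sending R_0 to itself); and (c) if n is even, the subgraph of H_n induced on W minus any fixed row does not contain a path on n vertices. Then there exists a set Z with W ⊆ Z ⊆ V(H_n) such that Z contains exactly one vertex from each column C_i and Z still satisfies conditions (a)–(c). -/

import Mathlib

/-- Replicating a set `W` of vertices of `G`: each `w ∈ W` gets a clone (the
corresponding element of `Sum.inr`) adjacent to `w` and to all its neighbours. -/
def SimpleGraph.replicateSet {V : Type} (G : SimpleGraph V) (W : Set V) :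
    SimpleGraph (V ⊕ W) where
  Adj x y :=
    match x, y with
    | Sum.inl a, Sum.inl b => G.Adj a b
    | Sum.inl a, Sum.inr b => G.Adj a (b : V) ∨ a = (b : V)
    | Sum.inr a, Sum.inl b => G.Adj (a : V) b ∨ (a : V) = b
    | Sum.inr a, Sum.inr b => G.Adj (a : V) (b : V)
  symm := by
    constructor; rintro (a | a) (b | b) h <;> simp only at h ⊢ <;>
      first
        | exact G.adj_symm h
        | (rcases h with h | h
           · exact Or.inl (G.adj_symm h)
           · exact Or.inr h.symm)
  loopless := by
    constructor; rintro (a | a) h <;> simp only at h <;> exact G.loopless.irrefl _ h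

/-- Gallai's graph `H n`: the Cartesian product of the path on `Fin n` with the
triangle on `ZMod 3`, together with the three twist edges joining `(0, j)` to
`(n-1, -j)`. -/
def Hgraph (n : ℕ) : SimpleGraph (Fin n × ZMod 3) :=
  SimpleGraph.fromRel (fun x y =>
    (x.1 = y.1 ∧ x.2 ≠ y.2) ∨
    ((x.1 : ℕ) + 1 = (y.1 : ℕ) ∧ x.2 = y.2) ∨
    ((x.1 : ℕ) = 0 ∧ (y.1 : ℕ) = n - 1 ∧ y.2 = -x.2))

/-- `G` is `k`-critical: `χ(G) = k` and deleting any vertex leaves a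
`(k-1)`-colourable graph. -/
def SimpleGraph.IsCrit {V : Type} (G : SimpleGraph V) (k : ℕ) : Prop :=
  G.chromaticNumber = k ∧
    ∀ v : V, (SimpleGraph.induce {u | u ≠ v} G).Colorable (k - 1)

/-- The induced subgraph of `H n` on `S` contains a path with `m` vertices. -/
def hasPathOn (n : ℕ) (S : Set (Fin n × ZMod 3)) (m : ℕ) : Prop :=
  ∃ f : Fin m → Fin n × ZMod 3, Function.Injective f ∧ (∀ k, f k ∈ S) ∧
    ∀ (k : ℕ) (h : k + 1 < m),
      (Hgraph n).Adj (f ⟨k, Nat.lt_of_succ_lt h⟩) (f ⟨k + 1, h⟩)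

/-- Condition (a): some column contains at least two vertices of `W`. -/
def condA (n : ℕ) (W : Set (Fin n × ZMod 3)) : Prop :=
  ∃ i : Fin n, 2 ≤ (W ∩ {v | v.1 = i}).ncard

/-- Condition (b): `n` is odd and `W` contains at least `n - 1` vertices of the
row `R₀`. -/
def condB (n : ℕ) (W : Set (Fin n × ZMod 3)) : Prop :=
  Odd n ∧ n - 1 ≤ (W ∩ {v | v.2 = 0}).ncard

/-- Condition (c): `n` is even and the induced subgraph of `H n` on `W - R₀`
contains a path with at least `n` vertices. -/
def condC (n : ℕ) (W : Set (Fin n × ZMod 3)) : Prop :=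
  Even n ∧ ∃ m : ℕ, n ≤ m ∧ hasPathOn n (W \ {v | v.2 = 0}) m

/-- If `W` satisfies none of the conditions (a)–(c), it extends to a set `Z`
containing exactly one vertex from each column and still satisfying none of
(a)–(c). -/
theorem extend_to_full_transversal (n : ℕ) (hn : 4 ≤ n)
    (W : Set (Fin n × ZMod 3))
    (ha : ¬ condA n W) (hb : ¬ condB n W) (hc : ¬ condC n W) :
    ∃ Z : Set (Fin n × ZMod 3), W ⊆ Z ∧
      (∀ i : Fin n, (Z ∩ {v | v.1 = i}).ncard = 1) ∧
      ¬ condA n Z ∧ ¬ condB n Z ∧ ¬ condC n Z := by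
  classical
  have hWcol : ∀ i : Fin n, (W ∩ {v | v.1 = i}).ncard ≤ 1 := by
    intro i
    by_contra h
    exact ha ⟨i, by omega⟩
  by_cases hall : ∀ i : Fin n, (W ∩ {v | v.1 = i}).Nonempty
  · refine ⟨W, subset_rfl, fun i => ?_, ha, hb, hc⟩
    have h1 : 0 < (W ∩ {v | v.1 = i}).ncard := (Set.ncard_pos).mpr (hall i)
    have := hWcol i
    omega
  · push_neg at hall
    obtain ⟨i₀, hi₀⟩ := hall
    set r : Fin n → ZMod 3 :=
      fun i => if (W ∩ {v | v.2 = 0} = ∅ ∧ i = i₀) then 0 else 1 with hr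
    set Z : Set (Fin n × ZMod 3) :=
      W ∪ {v | W ∩ {u | u.1 = v.1} = ∅ ∧ v.2 = r v.1} with hZ
    have hWZ : W ⊆ Z := Set.subset_union_left
    -- column computations
    have hcol1 : ∀ i : Fin n, W ∩ {v | v.1 = i} = ∅ →
        Z ∩ {v | v.1 = i} = {((i : Fin n), r i)} := by
      intro i hi
      ext v
      constructor
      · rintro ⟨hv, hvi⟩
        rcases hv with hv | ⟨h1, h2⟩
        · have hmem' : v ∈ W ∩ {v | v.1 = i} := ⟨hv, hvi⟩
          rw [hi] at hmem'
          exact absurd hmem' (Set.notMem_empty v)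
        · have hvi' : v.1 = i := hvi
          have : v = (i, r i) := by
            rw [← hvi']
            exact Prod.ext rfl h2
          simpa using this
      · intro hv
        have hv' : v = (i, r i) := hv
        subst hv'
        exact ⟨Or.inr ⟨hi, rfl⟩, rfl⟩
    have hcol2 : ∀ i : Fin n, (W ∩ {v | v.1 = i}).Nonempty →
        Z ∩ {v | v.1 = i} = W ∩ {v | v.1 = i} := by
      intro i hi
      ext v
      constructor
      · rintro ⟨hv, hvi⟩
        rcases hv with hv | ⟨h1, h2⟩
        · exact ⟨hv, hvi⟩
        · have hvi' : v.1 = i := hvi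
          rw [hvi'] at h1
          rw [h1] at hi
          exact absurd hi (by simp)
      · rintro ⟨hv, hvi⟩
        exact ⟨hWZ hv, hvi⟩
    have hZcard : ∀ i : Fin n, (Z ∩ {v | v.1 = i}).ncard = 1 := by
      intro i
      by_cases hi : (W ∩ {v | v.1 = i}).Nonempty
      · rw [hcol2 i hi]
        have h1 : 0 < (W ∩ {v | v.1 = i}).ncard := (Set.ncard_pos).mpr hi
        have := hWcol i
        omega
      · rw [Set.not_nonempty_iff_eq_empty] at hi
        rw [hcol1 i hi]
        exact Set.ncard_singleton _
    have hZsing : ∀ i : Fin n, ∃ a, Z ∩ {v | v.1 = i} = {a} :=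
      fun i => Set.ncard_eq_one.mp (hZcard i)
    -- row-0 computations
    have hrow : (W ∩ {v | v.2 = 0} = ∅ → Z ∩ {v | v.2 = 0} = {((i₀ : Fin n), (0 : ZMod 3))})
        ∧ (W ∩ {v | v.2 = 0} ≠ ∅ → Z ∩ {v | v.2 = 0} = W ∩ {v | v.2 = 0}) := by
      constructor
      · intro h0
        ext v
        constructor
        · rintro ⟨hv, hv2⟩
          have hv2' : v.2 = 0 := hv2
          rcases hv with hv | ⟨h1, h2⟩
          · have hmem' : v ∈ W ∩ {v | v.2 = 0} := ⟨hv, hv2'⟩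
            rw [h0] at hmem'
            exact absurd hmem' (Set.notMem_empty v)
          · rw [hr] at h2
            by_cases hvi : v.1 = i₀
            · simp only [h0, hvi, and_self, if_true] at h2
              have : v = (i₀, (0 : ZMod 3)) := by
                rw [← hvi]; exact Prod.ext rfl h2
              simpa using this
            · simp only [hvi, and_false, if_false] at h2
              rw [h2] at hv2'
              exact absurd hv2' (by decide)
        · intro hv
          have hv' : v = (i₀, (0 : ZMod 3)) := hv
          subst hv'
          refine ⟨Or.inr ⟨hi₀, ?_⟩, rfl⟩
          rw [hr]
          simp [h0]
      · intro h0
        ext v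
        constructor
        · rintro ⟨hv, hv2⟩
          have hv2' : v.2 = 0 := hv2
          rcases hv with hv | ⟨h1, h2⟩
          · exact ⟨hv, hv2'⟩
          · rw [hr] at h2
            simp only [h0, false_and, if_false] at h2
            rw [h2] at hv2'
            exact absurd hv2' (by decide)
        · rintro ⟨hv, hv2⟩
          exact ⟨hWZ hv, hv2⟩
    have hrow0ne : (Z ∩ {v | v.2 = 0}).Nonempty := by
      by_cases h0 : W ∩ {v | v.2 = 0} = ∅
      · rw [hrow.1 h0]; exact ⟨_, rfl⟩
      · obtain ⟨w, hw⟩ := Set.nonempty_iff_ne_empty.mpr h0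
        exact ⟨w, hWZ hw.1, hw.2⟩
    refine ⟨Z, hWZ, hZcard, ?_, ?_, ?_⟩
    · rintro ⟨i, h2⟩
      rw [hZcard i] at h2
      omega
    · rintro ⟨hodd, hcard⟩
      by_cases h0 : W ∩ {v | v.2 = 0} = ∅
      · rw [hrow.1 h0, Set.ncard_singleton] at hcard
        omega
      · rw [hrow.2 h0] at hcard
        exact hb ⟨hodd, hcard⟩
    · rintro ⟨hev, m, hnm, f, hinj, hmem, hadj⟩
      obtain ⟨z₀, hz₀Z, hz₀2⟩ := hrow0ne
      have hz₀2' : z₀.2 = 0 := hz₀2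
      -- the column map is injective on Z
      have hcolinj : ∀ x y, x ∈ Z → y ∈ Z → x.1 = y.1 → x = y := by
        intro x y hx hy hxy
        obtain ⟨a, hA⟩ := hZsing x.1
        have hx' : x ∈ Z ∩ {v | v.1 = x.1} := ⟨hx, rfl⟩
        have hy' : y ∈ Z ∩ {v | v.1 = x.1} := ⟨hy, hxy.symm⟩
        rw [hA] at hx' hy'
        rw [Set.mem_singleton_iff] at hx' hy'
        rw [hx', hy']
      have hginj : Function.Injective (fun k => (f k).1) := by
        intro k l hkl
        have hk := hmem k
        have hl := hmem l
        exact hinj (hcolinj _ _ hk.1 hl.1 hkl)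
      have hgne : ∀ k, (f k).1 ≠ z₀.1 := by
        intro k hk
        have hfk := hmem k
        have : f k = z₀ := hcolinj _ _ hfk.1 hz₀Z hk
        exact hfk.2 (by rw [this]; exact hz₀2')
      have hmn : m ≤ n - 1 := by
        have h1 : (Finset.univ.image (fun k => (f k).1)).card = m := by
          rw [Finset.card_image_of_injective _ hginj, Finset.card_univ, Fintype.card_fin]
        have h2 : Finset.univ.image (fun k => (f k).1) ⊆ Finset.univ.erase z₀.1 := by
          intro x hx
          obtain ⟨k, _, hk⟩ := Finset.mem_image.mp hx
          exact Finset.mem_erase.mpr ⟨hk ▸ hgne k, Finset.mem_univ x⟩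
        have h3 := Finset.card_le_card h2
        rw [h1, Finset.card_erase_of_mem (Finset.mem_univ _), Finset.card_univ,
          Fintype.card_fin] at h3
        exact h3
      omega
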